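/- Let K be a field, r ≥ 1 and 0 ≤ h ≤ r integers, z₁, …, z_r ∈ K with z_i ≠ 0 for all i > h, and a ∈ K with a ≠ 0. Set t = (∏_{i=1}^h z_i) · (∏_{i=h+1}^r z_i^{-1}). Then 1 − t = Σ_{∅ ≠ I ⊆ {1,…,h}} (−1)^{|I|+1} ∏_{i∈I}(1 − z_i) − a^{-1} Σ_{∅ ≠ I ⊆ {h+1,…,r}} (−1)^{|I|+1} ∏_{i∈I}(1 − z_i) + a^{-1} Σ_{∅ ≠ I ⊆ {h+1,…,r}} (−1)^{|I|+1} (∏_{i∈I}(1 − z_i)) · (1 − a t). (Lemma 7.2.) -/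

import Mathlib

lemma aux_incl {K : Type*} [CommRing K] {ι : Type*} [DecidableEq ι] (S : Finset ι) (z : ι → K) :
    ∑ I ∈ S.powerset.erase ∅, (-1:K)^(I.card+1) * ∏ i ∈ I, (1 - z i)
      = 1 - ∏ i ∈ S, z i := by
  have hp : ∏ i ∈ S, z i = ∑ I ∈ S.powerset, (-1:K)^I.card * ∏ i ∈ I, (1 - z i) := by
    have h := Finset.prod_add (fun i => -(1 - z i)) (fun _ => (1:K)) S
    simp only [Finset.prod_const_one, mul_one] at h
    have h2 : (∏ i ∈ S, (-(1 - z i) + 1)) = ∏ i ∈ S, z i := by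
      apply Finset.prod_congr rfl; intro i _; ring
    rw [← h2, h]
    apply Finset.sum_congr rfl
    intro I _
    have h3 : ∏ i ∈ I, -(1 - z i) = ∏ i ∈ I, ((-1:K) * (1 - z i)) := by
      apply Finset.prod_congr rfl; intro i _; ring
    rw [h3, Finset.prod_mul_distrib, Finset.prod_const]
  have he : (∅ : Finset ι) ∈ S.powerset := Finset.empty_mem_powerset S
  have hsub := Finset.sum_erase_eq_sub (f := fun I => (-1:K)^I.card * ∏ i ∈ I, (1 - z i)) he
  have h4 : ∑ I ∈ S.powerset.erase ∅, (-1:K)^(I.card+1) * ∏ i ∈ I, (1 - z i)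
      = - ∑ I ∈ S.powerset.erase ∅, (-1:K)^I.card * ∏ i ∈ I, (1 - z i) := by
    rw [← Finset.sum_neg_distrib]
    apply Finset.sum_congr rfl; intro I _; ring
  rw [h4, hsub, ← hp]
  simp

/-- **Lemma 7.2 (identity (cavol)).** Let `t = (∏_{i≤h} zᵢ) · (∏_{i>h} zᵢ⁻¹)` and `a ≠ 0`. Then
`1 − t = Σ_{∅≠I⊆{1,…,h}} (−1)^{|I|+1} ∏_{i∈I}(1 − zᵢ)
       − a⁻¹ Σ_{∅≠I⊆{h+1,…,r}} (−1)^{|I|+1} ∏_{i∈I}(1 − zᵢ)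
       + a⁻¹ Σ_{∅≠I⊆{h+1,…,r}} (−1)^{|I|+1} (∏_{i∈I}(1 − zᵢ)) (1 − a t)`. -/
theorem stmt10 {K : Type*} [Field K] (r h : ℕ) (hr : 1 ≤ r) (hh : h ≤ r)
    (z : Fin r → K) (hz : ∀ i : Fin r, h ≤ (i : ℕ) → z i ≠ 0)
    (a : K) (ha : a ≠ 0) (t : K)
    (ht : t = (∏ i ∈ Finset.univ.filter (fun i : Fin r => (i : ℕ) < h), z i) *
              (∏ i ∈ Finset.univ.filter (fun i : Fin r => h ≤ (i : ℕ)), (z i)⁻¹)) :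
    1 - t =
      (∑ I ∈ (Finset.univ.filter (fun i : Fin r => (i : ℕ) < h)).powerset.erase ∅,
        (-1 : K) ^ (I.card + 1) * ∏ i ∈ I, (1 - z i))
      - a⁻¹ * (∑ I ∈ (Finset.univ.filter (fun i : Fin r => h ≤ (i : ℕ))).powerset.erase ∅,
        (-1 : K) ^ (I.card + 1) * ∏ i ∈ I, (1 - z i))
      + a⁻¹ * (∑ I ∈ (Finset.univ.filter (fun i : Fin r => h ≤ (i : ℕ))).powerset.erase ∅,
        (-1 : K) ^ (I.card + 1) * (∏ i ∈ I, (1 - z i)) * (1 - a * t)) := by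
  set A := Finset.univ.filter (fun i : Fin r => (i : ℕ) < h) with hA
  set B := Finset.univ.filter (fun i : Fin r => h ≤ (i : ℕ)) with hB
  set P := ∏ i ∈ A, z i with hP
  set Q := ∏ i ∈ B, z i with hQdef
  have hQ : Q ≠ 0 := by
    rw [hQdef]
    apply Finset.prod_ne_zero_iff.mpr
    intro i hi
    exact hz i (by simpa [hB] using hi)
  have h3 : ∑ I ∈ B.powerset.erase ∅,
      (-1 : K) ^ (I.card + 1) * (∏ i ∈ I, (1 - z i)) * (1 - a * t)
      = (1 - Q) * (1 - a * t) := by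
    rw [← Finset.sum_mul, aux_incl]
  rw [aux_incl, aux_incl, h3, ← hP, ← hQdef]
  have htP : Q * t = P := by
    rw [ht, Finset.prod_inv_distrib, ← hQdef]
    field_simp
  field_simp
  linear_combination (-a) * htP
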